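/- Let λ and μ be partitions of a positive integer n. If λ ≥_c μ and μ ≥_c λ in the consumption ordering, then λ = μ. (Hence the consumption ordering is antisymmetric and defines a partial order on partitions of n.) -/

import Mathlib

/-- A subgroup `H` of `S_n` consumes a partition `λ ⊢ n` if there is a set partition of
`{1,…,n}` whose multiset of block sizes is `λ` and such that the only element of `H`
mapping each block to itself is the identity. -/
def Consumes (n : ℕ) (H : Subgroup (Equiv.Perm (Fin n))) (lam : Nat.Partition n) : Prop :=
  ∃ P : Finset (Finset (Fin n)),
    (∀ i : Fin n, ∃! B : Finset (Fin n), B ∈ P ∧ i ∈ B) ∧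
    P.val.map Finset.card = lam.parts ∧
    ∀ σ ∈ H, (∀ B ∈ P, ∀ i ∈ B, σ i ∈ B) → σ = 1

open Finset

namespace ConsAux
variable {n : ℕ}

/-- The composition of `n` given by a partition's parts (in `toList` order). -/
noncomputable def comp (lam : Nat.Partition n) : Composition n :=
  ⟨lam.parts.toList, fun h => lam.parts_pos (Multiset.mem_toList.mp h),
    by rw [Multiset.sum_toList]; exact lam.parts_sum⟩

@[simp] lemma comp_blocks (lam : Nat.Partition n) : (comp lam).blocks = lam.parts.toList := rfl

/-- color of a point: its offset inside its block, if `< m`. -/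
noncomputable def color (c : Composition n) (m : ℕ) (x : Fin n) : Option (Fin m) :=
  if h : (c.invEmbedding x : ℕ) < m then some ⟨_, h⟩ else none

lemma color_ne_none_iff (c : Composition n) (m : ℕ) (x : Fin n) :
    color c m x ≠ none ↔ (c.invEmbedding x : ℕ) < m := by
  constructor
  · intro h
    by_contra hm
    exact h (dif_neg hm)
  · intro h
    rw [color, dif_pos h]
    exact Option.some_ne_none _

lemma color_eq_some {c : Composition n} {m : ℕ} {x : Fin n} {k : Fin m}
    (h : color c m x = some k) : (c.invEmbedding x : ℕ) = (k : ℕ) := by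
  unfold color at h; split at h
  · cases h; rfl
  · cases h

/-- the subgroup of permutations preserving the coloring and fixing uncolored points. -/
noncomputable def grp (c : Composition n) (m : ℕ) : Subgroup (Equiv.Perm (Fin n)) where
  carrier := {σ | (∀ x, color c m (σ x) = color c m x) ∧
    ∀ x, color c m x = none → σ x = x}
  one_mem' := ⟨fun _ => rfl, fun _ _ => rfl⟩
  mul_mem' := by
    rintro σ τ ⟨hσ1, hσ2⟩ ⟨hτ1, hτ2⟩
    refine ⟨fun x => ?_, fun x hx => ?_⟩
    · simp only [Equiv.Perm.mul_apply]; rw [hσ1, hτ1]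
    · simp only [Equiv.Perm.mul_apply, hτ2 x hx, hσ2 x hx]
  inv_mem' := by
    rintro σ ⟨h1, h2⟩
    refine ⟨fun x => ?_, fun x hx => ?_⟩
    · conv_rhs => rw [← (show σ (σ⁻¹ x) = x from Equiv.apply_symm_apply σ x)]
      rw [h1]
    · have := h2 x hx
      conv_lhs => rw [← this]
      exact σ.symm_apply_apply x

lemma mem_grp_iff {c : Composition n} {m : ℕ} {σ : Equiv.Perm (Fin n)} :
    σ ∈ grp c m ↔ (∀ x, color c m (σ x) = color c m x) ∧
      ∀ x, color c m x = none → σ x = x := Iff.rfl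


/-- the `i`-th block as a Finset. -/
def blk (c : Composition n) (i : Fin c.length) : Finset (Fin n) :=
  Finset.univ.image (fun j : Fin (c.blocksFun i) => c.embedding i j)

lemma mem_blk_iff {c : Composition n} {i : Fin c.length} {x : Fin n} :
    x ∈ blk c i ↔ c.index x = i := by
  constructor
  · rintro h
    rw [blk, Finset.mem_image] at h
    obtain ⟨j, -, rfl⟩ := h
    exact c.index_embedding i j
  · rintro rfl
    rw [blk, Finset.mem_image]
    exact ⟨c.invEmbedding x, Finset.mem_univ _, c.embedding_comp_inv x⟩

lemma card_blk (c : Composition n) (i : Fin c.length) : (blk c i).card = c.blocksFun i := by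
  rw [blk, Finset.card_image_of_injective _ (c.embedding i).injective, Finset.card_univ,
    Fintype.card_fin]

lemma blk_injective (c : Composition n) : Function.Injective (blk c) := by
  intro i i' h
  have hpos : 0 < c.blocksFun i := c.one_le_blocksFun i
  have hx : c.embedding i ⟨0, hpos⟩ ∈ blk c i := by
    rw [blk, Finset.mem_image]; exact ⟨_, Finset.mem_univ _, rfl⟩
  have h1 : c.index (c.embedding i ⟨0, hpos⟩) = i := c.index_embedding i _
  have h2 : c.index (c.embedding i ⟨0, hpos⟩) = i' := mem_blk_iff.mp (h ▸ hx)
  rw [← h1, h2]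

/-- the set partition from a composition -/
def part (c : Composition n) : Finset (Finset (Fin n)) := Finset.univ.image (blk c)

lemma mem_part_iff {c : Composition n} {B : Finset (Fin n)} :
    B ∈ part c ↔ ∃ i, blk c i = B := by
  simp [part]

lemma part_exists_unique (c : Composition n) (x : Fin n) :
    ∃! B : Finset (Fin n), B ∈ part c ∧ x ∈ B := by
  refine ⟨blk c (c.index x), ⟨mem_part_iff.mpr ⟨_, rfl⟩, mem_blk_iff.mpr rfl⟩, ?_⟩
  rintro B ⟨hB, hxB⟩
  obtain ⟨i, rfl⟩ := mem_part_iff.mp hB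
  rw [mem_blk_iff.mp hxB]

lemma part_sizes (lam : Nat.Partition n) : (part (comp lam)).val.map Finset.card = lam.parts := by
  rw [part, Finset.image_val_of_injOn ((blk_injective (comp lam)).injOn)]
  rw [Multiset.map_map]
  have : (Finset.card ∘ blk (comp lam)) = (comp lam).blocksFun := by
    funext i; exact card_blk _ i
  rw [this]
  rw [Fin.univ_val_map]
  rw [Composition.ofFn_blocksFun, comp_blocks, Multiset.coe_toList]

lemma val_eq_sizeUpTo_add (c : Composition n) (x : Fin n) :
    (x : ℕ) = c.sizeUpTo (c.index x) + (c.invEmbedding x : ℕ) := by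
  have h1 := c.sizeUpTo_index_le x
  rw [Composition.coe_invEmbedding]
  omega

lemma consumes_self (lam : Nat.Partition n) (m : ℕ) :
    Consumes n (grp (comp lam) m) lam := by
  set c := comp lam with hc
  refine ⟨part c, part_exists_unique c, part_sizes lam, ?_⟩
  rintro σ ⟨hcol, hfix⟩ hpres
  refine Equiv.ext fun x => ?_
  rw [Equiv.Perm.one_apply]
  cases hcolx : color c m x with
  | none => exact hfix x hcolx
  | some k =>
    have hxblk : x ∈ blk c (c.index x) := mem_blk_iff.mpr rfl
    have hσblk : σ x ∈ blk c (c.index x) :=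
      hpres _ (mem_part_iff.mpr ⟨_, rfl⟩) _ hxblk
    have hidx : c.index (σ x) = c.index x := mem_blk_iff.mp hσblk
    have hcolσ : color c m (σ x) = some k := by rw [hcol x, hcolx]
    have e1 : (c.invEmbedding (σ x) : ℕ) = (k : ℕ) := color_eq_some hcolσ
    have e2 : (c.invEmbedding x : ℕ) = (k : ℕ) := color_eq_some hcolx
    have v1 := val_eq_sizeUpTo_add c (σ x)
    have v2 := val_eq_sizeUpTo_add c x
    apply Fin.val_injective
    rw [v1, v2, e1, e2, hidx]

/-- `Sfun m M` is `∑_{x ∈ M} min x m`. -/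
def Sfun (m : ℕ) (M : Multiset ℕ) : ℕ := (M.map fun x => min x m).sum

lemma card_fin_filter_lt (b m : ℕ) :
    ((Finset.univ : Finset (Fin b)).filter fun j : Fin b => (j : ℕ) < m).card = min b m := by
  have h : ∀ a ∈ Finset.range (min b m), a < b := by
    intro a ha; rw [Finset.mem_range] at ha; omega
  have : ((Finset.univ : Finset (Fin b)).filter fun j : Fin b => (j : ℕ) < m)
      = (Finset.range (min b m)).attachFin h := by
    ext j
    rw [Finset.mem_attachFin, Finset.mem_filter, Finset.mem_range]
    have := j.isLt
    constructor
    · rintro ⟨-, h2⟩; omega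
    · intro h2; exact ⟨Finset.mem_univ _, by omega⟩
  rw [this, Finset.card_attachFin, Finset.card_range]

lemma fiber_card (c : Composition n) (m : ℕ) (i : Fin c.length) :
    (((Finset.univ : Finset (Fin n)).filter fun x => color c m x ≠ none).filter
      fun x => c.index x = i).card = min (c.blocksFun i) m := by
  have himg : (((Finset.univ : Finset (Fin n)).filter fun x => color c m x ≠ none).filter
      fun x => c.index x = i)
      = ((Finset.univ : Finset (Fin (c.blocksFun i))).filter fun j : Fin (c.blocksFun i) => (j : ℕ) < m).image
        (fun j => c.embedding i j) := by
    ext x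
    simp only [Finset.mem_filter, Finset.mem_univ, true_and, Finset.mem_image,
      color_ne_none_iff]
    constructor
    · rintro ⟨hlt, hidx⟩
      have hx : x ∈ blk c i := mem_blk_iff.mpr hidx
      rw [blk, Finset.mem_image] at hx
      obtain ⟨j, -, rfl⟩ := hx
      refine ⟨j, ?_, rfl⟩
      rwa [c.invEmbedding_comp i j] at hlt
    · rintro ⟨j, hj, rfl⟩
      refine ⟨by rwa [c.invEmbedding_comp i j], c.index_embedding i j⟩
  rw [himg, Finset.card_image_of_injective _ (c.embedding i).injective, card_fin_filter_lt]

lemma colored_card (lam : Nat.Partition n) (m : ℕ) :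
    ((Finset.univ : Finset (Fin n)).filter fun x => color (comp lam) m x ≠ none).card
      = Sfun m lam.parts := by
  set c := comp lam with hc
  rw [Finset.card_eq_sum_card_fiberwise (f := c.index)
    (t := (Finset.univ : Finset (Fin c.length))) (fun x _ => Finset.mem_univ _)]
  have : ∀ i ∈ (Finset.univ : Finset (Fin c.length)),
      (((Finset.univ : Finset (Fin n)).filter fun x => color c m x ≠ none).filter
        fun x => c.index x = i).card = min (c.blocksFun i) m :=
    fun i _ => fiber_card c m i
  rw [Finset.sum_congr rfl this]
  have : Sfun m lam.parts = ((Multiset.ofList lam.parts.toList).map fun x => min x m).sum := by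
    rw [Multiset.coe_toList]; rfl
  rw [this, ← comp_blocks lam, ← Composition.ofFn_blocksFun, ← hc]
  rw [Multiset.map_coe, Multiset.sum_coe, List.map_ofFn, List.sum_ofFn]
  rfl

lemma consumed_le (lam mu : Nat.Partition n) (m : ℕ)
    (h : Consumes n (grp (comp lam) m) mu) : Sfun m lam.parts ≤ Sfun m mu.parts := by
  classical
  obtain ⟨P, hP1, hP2, hP3⟩ := h
  set c := comp lam with hc
  -- step A : injectivity of the coloring on each block
  have stepA : ∀ B ∈ P, ∀ x ∈ B, ∀ y ∈ B,
      color c m x = color c m y → color c m x ≠ none → x = y := by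
    intro B hB x hx y hy hcxy hcx
    by_contra hne
    have hmem : Equiv.swap x y ∈ grp c m := by
      constructor
      · intro z
        rcases eq_or_ne z x with rfl | hzx
        · rw [Equiv.swap_apply_left, ← hcxy]
        · rcases eq_or_ne z y with rfl | hzy
          · rw [Equiv.swap_apply_right, hcxy]
          · rw [Equiv.swap_apply_of_ne_of_ne hzx hzy]
      · intro z hz
        have hzx : z ≠ x := by rintro rfl; exact hcx hz
        have hzy : z ≠ y := by rintro rfl; rw [← hcxy] at hz; exact hcx hz
        exact Equiv.swap_apply_of_ne_of_ne hzx hzy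
    have hpres : ∀ B' ∈ P, ∀ i ∈ B', Equiv.swap x y i ∈ B' := by
      intro B' hB' i hi
      rcases eq_or_ne i x with rfl | hix
      · have hBB' : B' = B := (hP1 i).unique ⟨hB', hi⟩ ⟨hB, hx⟩
        rw [Equiv.swap_apply_left, hBB']; exact hy
      · rcases eq_or_ne i y with rfl | hiy
        · have hBB' : B' = B := (hP1 i).unique ⟨hB', hi⟩ ⟨hB, hy⟩
          rw [Equiv.swap_apply_right, hBB']; exact hx
        · rwa [Equiv.swap_apply_of_ne_of_ne hix hiy]
    exact hne (Equiv.swap_eq_one_iff.mp (hP3 _ hmem hpres))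
  -- step B : each block has at most `min |B| m` colored elements
  have stepB : ∀ B ∈ P, (B.filter fun x => color c m x ≠ none).card ≤ min B.card m := by
    intro B hB
    refine le_min (Finset.card_le_card (Finset.filter_subset _ _)) ?_
    have : (B.filter fun x => color c m x ≠ none).card ≤
        ((Finset.univ : Finset (Fin m)).image some).card := by
      apply Finset.card_le_card_of_injOn (f := color c m)
      · intro x hxf
        rw [Finset.mem_coe, Finset.mem_filter] at hxf
        obtain ⟨k, hk⟩ := Option.ne_none_iff_exists'.mp hxf.2
        rw [hk, Finset.mem_coe, Finset.mem_image]
        exact ⟨k, Finset.mem_univ _, rfl⟩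
      · intro x hxf y hyf hxy
        rw [Finset.mem_coe, Finset.mem_filter] at hxf hyf
        exact stepA B hB x hxf.1 y hyf.1 hxy hxf.2
    rwa [Finset.card_image_of_injective _ (Option.some_injective _), Finset.card_univ,
      Fintype.card_fin] at this
  -- step C : the colored set is the disjoint union over blocks
  set X := (Finset.univ : Finset (Fin n)).filter fun x => color c m x ≠ none with hX
  have stepC : X = P.biUnion fun B => B.filter fun x => color c m x ≠ none := by
    ext z
    rw [hX, Finset.mem_filter, Finset.mem_biUnion]
    constructor
    · rintro ⟨-, hz⟩
      obtain ⟨B, ⟨hB, hzB⟩, -⟩ := hP1 z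
      exact ⟨B, hB, Finset.mem_filter.mpr ⟨hzB, hz⟩⟩
    · rintro ⟨B, -, hzB⟩
      exact ⟨Finset.mem_univ _, (Finset.mem_filter.mp hzB).2⟩
  have hdisj : ∀ B ∈ P, ∀ B' ∈ P, B ≠ B' →
      Disjoint (B.filter fun x => color c m x ≠ none)
        (B'.filter fun x => color c m x ≠ none) := by
    intro B hB B' hB' hne
    rw [Finset.disjoint_left]
    intro z hz hz'
    rw [Finset.mem_filter] at hz hz'
    exact hne ((hP1 z).unique ⟨hB, hz.1⟩ ⟨hB', hz'.1⟩)
  calc Sfun m lam.parts = X.card := (colored_card lam m).symm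
    _ = ∑ B ∈ P, (B.filter fun x => color c m x ≠ none).card := by
        rw [stepC, Finset.card_biUnion hdisj]
    _ ≤ ∑ B ∈ P, min B.card m := Finset.sum_le_sum stepB
    _ = Sfun m mu.parts := by
        rw [Finset.sum_eq_multiset_sum, Sfun, ← hP2, Multiset.map_map]
        rfl

lemma Sfun_succ (k : ℕ) (M : Multiset ℕ) :
    Sfun (k + 1) M = Sfun k M + M.countP (fun x => k + 1 ≤ x) := by
  induction M using Multiset.induction with
  | empty => simp [Sfun]
  | cons a s ih =>
    simp only [Sfun, Multiset.map_cons, Multiset.sum_cons, Multiset.countP_cons] at *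
    rw [ih]
    split_ifs <;> omega

lemma countP_split (k : ℕ) (M : Multiset ℕ) :
    M.countP (fun x => k ≤ x) = M.count k + M.countP (fun x => k + 1 ≤ x) := by
  induction M using Multiset.induction with
  | empty => simp
  | cons a s ih =>
    simp only [Multiset.countP_cons, Multiset.count_cons, ih]
    split_ifs <;> omega

lemma parts_eq_of_Sfun_eq (lam mu : Nat.Partition n)
    (hS : ∀ m, Sfun m lam.parts = Sfun m mu.parts) : lam = mu := by
  have hcountP : ∀ k : ℕ, lam.parts.countP (fun x => k + 1 ≤ x)
      = mu.parts.countP (fun x => k + 1 ≤ x) := by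
    intro k
    have h1 := Sfun_succ k lam.parts
    have h2 := Sfun_succ k mu.parts
    have e1 := hS k
    have e2 := hS (k + 1)
    omega
  have hcount : ∀ t : ℕ, lam.parts.count t = mu.parts.count t := by
    intro t
    cases t with
    | zero =>
      have hl : lam.parts.count 0 = 0 :=
        Multiset.count_eq_zero.mpr (fun h => absurd (lam.parts_pos h) (lt_irrefl 0))
      have hm : mu.parts.count 0 = 0 :=
        Multiset.count_eq_zero.mpr (fun h => absurd (mu.parts_pos h) (lt_irrefl 0))
      rw [hl, hm]
    | succ k =>
      have h1 := countP_split (k + 1) lam.parts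
      have h2 := countP_split (k + 1) mu.parts
      have e1 := hcountP k
      have e2 := hcountP (k + 1)
      omega
  exact Nat.Partition.ext (Multiset.ext.mpr hcount)

end ConsAux


/-- The consumption ordering is antisymmetric: if `λ ≥_c μ` and `μ ≥_c λ`, then `λ = μ`. -/
theorem consumption_antisymm (n : ℕ) (hn : 0 < n) (lam mu : Nat.Partition n)
    (h₁ : ∀ H : Subgroup (Equiv.Perm (Fin n)), Consumes n H lam → Consumes n H mu)
    (h₂ : ∀ H : Subgroup (Equiv.Perm (Fin n)), Consumes n H mu → Consumes n H lam) :
    lam = mu := by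
  apply ConsAux.parts_eq_of_Sfun_eq
  intro m
  have hle : ConsAux.Sfun m lam.parts ≤ ConsAux.Sfun m mu.parts :=
    ConsAux.consumed_le lam mu m (h₁ _ (ConsAux.consumes_self lam m))
  have hge : ConsAux.Sfun m mu.parts ≤ ConsAux.Sfun m lam.parts :=
    ConsAux.consumed_le mu lam m (h₂ _ (ConsAux.consumes_self mu m))
  omega
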